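/- Let α > 0 and let x ≠ 0 satisfy ‖P_Ess(Ax)‖ ≤ α·‖P_Ecu(Ax)‖ (the flow direction at x lies in the α-cone of Ecu). Then for every t ≥ 0 and every v ∈ Ess with v ⊥ Ax: ‖ψ*_t(x)v‖ ≤ C²·√(1+α²)·exp(−(λ_c − λ_ss)·t)·‖v‖. In particular the scaled linear Poincaré flow is uniformly exponentially contracting on strong-stable normal directions along orbits whose flow direction lies in the center-unstable cone (linear-model form of Lemma 3.7). -/

import Mathlib

open NormedSpace RealInnerProductSpace

/-- The scaled linear Poincaré flow of the linear flow `exp (t • A)`: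
`ψ*_t(x) v = (‖Ax‖/‖A φ_t x‖) • π_{φ_t x} (exp (t • A) v)`, where `π_y` is the
orthogonal projection onto `N_y = (ℝ ∙ A y)ᗮ`. -/
noncomputable def scaledLPF {d : ℕ}
    (A : EuclideanSpace ℝ (Fin d) →L[ℝ] EuclideanSpace ℝ (Fin d))
    (t : ℝ) (x v : EuclideanSpace ℝ (Fin d)) : EuclideanSpace ℝ (Fin d) :=
  (‖A x‖ / ‖A (exp (t • A) x)‖) •
    ((Submodule.orthogonalProjectionOnto (ℝ ∙ (A (exp (t • A) x)))ᗮ (exp (t • A) v) :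
      EuclideanSpace ℝ (Fin d)))

set_option maxHeartbeats 2000000

lemma exp_mem_of_invariant {d : ℕ}
    (B : EuclideanSpace ℝ (Fin d) →L[ℝ] EuclideanSpace ℝ (Fin d))
    (p : Submodule ℝ (EuclideanSpace ℝ (Fin d)))
    (hp : ∀ v ∈ p, B v ∈ p) {v : EuclideanSpace ℝ (Fin d)} (hv : v ∈ p) :
    exp B v ∈ p := by
  have hpow : ∀ n : ℕ, (B ^ n) v ∈ p := by
    intro n
    induction n with
    | zero => simpa using hv
    | succ n ih => rw [pow_succ', ContinuousLinearMap.mul_apply]; exact hp _ ih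
  have hsum : Summable fun n : ℕ => (((Nat.factorial n : ℝ)⁻¹) • B ^ n) :=
    expSeries_summable' B
  have h1 : HasSum (fun n : ℕ => (((Nat.factorial n : ℝ)⁻¹) • B ^ n) v) (exp B v) := by
    have := hsum.hasSum
    have h2 := this.mapL (ContinuousLinearMap.apply ℝ (EuclideanSpace ℝ (Fin d)) v)
    simp only [ContinuousLinearMap.apply_apply] at h2
    rw [exp_eq_tsum (𝕂 := ℝ)]
    simpa using h2
  have hclosed : IsClosed (p : Set (EuclideanSpace ℝ (Fin d))) :=
    p.closed_of_finiteDimensional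
  refine hclosed.mem_of_tendsto h1 (Filter.Eventually.of_forall ?_)
  intro s
  exact Submodule.sum_mem p fun n _ => by
    simpa using Submodule.smul_mem p _ (hpow n)

lemma norm_orthProj_le {d : ℕ} (K : Submodule ℝ (EuclideanSpace ℝ (Fin d)))
    (w : EuclideanSpace ℝ (Fin d)) :
    ‖(Submodule.orthogonalProjectionOnto K w : EuclideanSpace ℝ (Fin d))‖ ≤ ‖w‖ := by
  have h1 := (Submodule.orthogonalProjectionOnto K).le_opNorm w
  have h2 := Submodule.orthogonalProjectionOnto_norm_le K
  calc ‖(Submodule.orthogonalProjectionOnto K w : EuclideanSpace ℝ (Fin d))‖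
      = ‖Submodule.orthogonalProjectionOnto K w‖ := rfl
    _ ≤ ‖Submodule.orthogonalProjectionOnto K‖ * ‖w‖ := h1
    _ ≤ 1 * ‖w‖ := by gcongr
    _ = ‖w‖ := one_mul _


/-- Linear-model form of Lemma 3.7: near a Lorenz-like singularity (orthogonal
`A`-invariant splitting `E = Ess ⊕ Ecu` with rates `λ_ss < λ_c`), at a point `x ≠ 0`
whose flow direction lies in the `α`-cone of `Ecu`, the scaled linear Poincaré flow
contracts strong-stable normal directions uniformly exponentially:
`‖ψ*_t(x)v‖ ≤ C²·√(1+α²)·exp(−(λ_c − λ_ss)t)·‖v‖` for `v ∈ Ess`, `v ⊥ Ax`, `t ≥ 0`. -/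
theorem scaledLPF_contracts_strong_stable {d : ℕ}
    (A : EuclideanSpace ℝ (Fin d) →L[ℝ] EuclideanSpace ℝ (Fin d))
    (hA : Function.Bijective A)
    (Ess : Submodule ℝ (EuclideanSpace ℝ (Fin d)))
    (C lamSS lamC : ℝ) (hC : 1 ≤ C) (hlam : lamSS < lamC)
    (hinvs : ∀ v ∈ Ess, A v ∈ Ess) (hinvcu : ∀ v ∈ Essᗮ, A v ∈ Essᗮ)
    (hss : ∀ v ∈ Ess, ∀ t : ℝ, 0 ≤ t →
      ‖exp (t • A) v‖ ≤ C * Real.exp (lamSS * t) * ‖v‖)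
    (hcu : ∀ v ∈ Essᗮ, ∀ t : ℝ, 0 ≤ t →
      C⁻¹ * Real.exp (lamC * t) * ‖v‖ ≤ ‖exp (t • A) v‖)
    (α : ℝ) (hα : 0 < α)
    (x : EuclideanSpace ℝ (Fin d)) (hx : x ≠ 0)
    (hdir : ‖(Submodule.orthogonalProjectionOnto Ess (A x) : EuclideanSpace ℝ (Fin d))‖ ≤
      α * ‖(Submodule.orthogonalProjectionOnto Essᗮ (A x) : EuclideanSpace ℝ (Fin d))‖) :
    ∀ t : ℝ, 0 ≤ t → ∀ v ∈ Ess, ⟪v, A x⟫ = 0 →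
      ‖scaledLPF A t x v‖ ≤
        C ^ 2 * Real.sqrt (1 + α ^ 2) * Real.exp (-(lamC - lamSS) * t) * ‖v‖ := by
  intro t ht v hv hvAx
  have hC0 : (0:ℝ) < C := lt_of_lt_of_le one_pos hC
  set Φ : EuclideanSpace ℝ (Fin d) →L[ℝ] EuclideanSpace ℝ (Fin d) := exp (t • A) with hΦ
  set s : EuclideanSpace ℝ (Fin d) := (Submodule.orthogonalProjectionOnto Ess (A x) : EuclideanSpace ℝ (Fin d)) with hs_def
  set u : EuclideanSpace ℝ (Fin d) := (Submodule.orthogonalProjectionOnto Essᗮ (A x) : EuclideanSpace ℝ (Fin d)) with hu_def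
  have hs : s ∈ Ess := (Submodule.orthogonalProjectionOnto Ess (A x)).2
  have hu : u ∈ Essᗮ := (Submodule.orthogonalProjectionOnto Essᗮ (A x)).2
  have hdecomp : s + u = A x :=
    Ess.starProjection_add_starProjection_orthogonal (A x)
  have hAx_ne : A x ≠ 0 := by
    intro h
    exact hx (hA.injective (h.trans (map_zero A).symm))
  have hu_pos : 0 < ‖u‖ := by
    rcases eq_or_lt_of_le (norm_nonneg u) with h | h
    · exfalso
      have hu0 : u = 0 := norm_eq_zero.mp h.symm
      have hs0 : s = 0 := by
        have : ‖s‖ ≤ 0 := by simpa [hu0] using hdir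
        exact norm_eq_zero.mp (le_antisymm this (norm_nonneg s))
      exact hAx_ne (by rw [← hdecomp, hs0, hu0, add_zero])
    · exact h
  have hsu : ⟪s, u⟫ = 0 := Submodule.inner_right_of_mem_orthogonal hs hu
  have hAx_sq : ‖A x‖ ^ 2 = ‖s‖ ^ 2 + ‖u‖ ^ 2 := by
    rw [← hdecomp, norm_add_sq_real, hsu]; ring
  have hAx_le : ‖A x‖ ≤ Real.sqrt (1 + α ^ 2) * ‖u‖ := by
    have h1 : ‖A x‖ ^ 2 ≤ (1 + α ^ 2) * ‖u‖ ^ 2 := by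
      rw [hAx_sq]
      nlinarith [pow_le_pow_left₀ (norm_nonneg s) hdir 2, norm_nonneg u, norm_nonneg s]
    calc ‖A x‖ = Real.sqrt (‖A x‖ ^ 2) := (Real.sqrt_sq (norm_nonneg _)).symm
      _ ≤ Real.sqrt ((1 + α ^ 2) * ‖u‖ ^ 2) := Real.sqrt_le_sqrt h1
      _ = Real.sqrt (1 + α ^ 2) * ‖u‖ := by
          rw [Real.sqrt_mul (by positivity), Real.sqrt_sq (norm_nonneg _)]
  -- A commutes with Φ
  have hcomm : A (Φ x) = Φ (A x) := by
    have h0 : Commute (t • A) A := by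
      unfold Commute SemiconjBy
      ext w
      simp [ContinuousLinearMap.mul_apply, map_smul]
    have h : Commute Φ A := hΦ ▸ h0.exp_left
    calc A (Φ x) = (A * Φ) x := rfl
      _ = (Φ * A) x := by rw [h.eq]
      _ = Φ (A x) := rfl
  -- invariance of Ess and Essᗮ under Φ
  have hinv_s : ∀ w ∈ Ess, (t • A) w ∈ Ess := fun w hw => by
    simpa [ContinuousLinearMap.smul_apply] using Ess.smul_mem t (hinvs w hw)
  have hinv_u : ∀ w ∈ Essᗮ, (t • A) w ∈ Essᗮ := fun w hw => by
    simpa [ContinuousLinearMap.smul_apply] using Essᗮ.smul_mem t (hinvcu w hw)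
  have hes : Φ s ∈ Ess := exp_mem_of_invariant _ _ hinv_s hs
  have heu : Φ u ∈ Essᗮ := exp_mem_of_invariant _ _ hinv_u hu
  have hesu : ⟪Φ s, Φ u⟫ = 0 :=
    Submodule.inner_right_of_mem_orthogonal hes heu
  have hAφ_ge : C⁻¹ * Real.exp (lamC * t) * ‖u‖ ≤ ‖A (Φ x)‖ := by
    have hsplit : A (Φ x) = Φ s + Φ u := by
      rw [hcomm, ← hdecomp, map_add]
    have hpyth : ‖Φ s + Φ u‖ ^ 2 = ‖Φ s‖ ^ 2 + ‖Φ u‖ ^ 2 := by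
      rw [norm_add_sq_real, hesu]; ring
    have h1 : ‖Φ u‖ ≤ ‖A (Φ x)‖ := by
      rw [hsplit]
      nlinarith [norm_nonneg (Φ s), norm_nonneg (Φ s + Φ u), norm_nonneg (Φ u)]
    exact le_trans (hcu u hu t ht) h1
  have hAφ_pos : 0 < ‖A (Φ x)‖ :=
    lt_of_lt_of_le (by positivity) hAφ_ge
  -- ratio bound
  have hratio : ‖A x‖ / ‖A (Φ x)‖ ≤
      C * Real.sqrt (1 + α ^ 2) * Real.exp (-lamC * t) := by
    have h1 : ‖A x‖ / ‖A (Φ x)‖ ≤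
        (Real.sqrt (1 + α ^ 2) * ‖u‖) / (C⁻¹ * Real.exp (lamC * t) * ‖u‖) :=
      div_le_div₀ (by positivity) hAx_le (by positivity) hAφ_ge
    have h2 : (Real.sqrt (1 + α ^ 2) * ‖u‖) / (C⁻¹ * Real.exp (lamC * t) * ‖u‖)
        = C * Real.sqrt (1 + α ^ 2) * Real.exp (-lamC * t) := by
      rw [show Real.exp (-lamC * t) = (Real.exp (lamC * t))⁻¹ by
        rw [← Real.exp_neg]; ring_nf]
      field_simp
    linarith [h1, h2.le]
  have hproj : ‖((Submodule.orthogonalProjectionOnto (ℝ ∙ (A (Φ x)))ᗮ (Φ v) :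
      EuclideanSpace ℝ (Fin d)))‖ ≤ ‖Φ v‖ :=
    norm_orthProj_le _ _
  have hexpv : ‖Φ v‖ ≤ C * Real.exp (lamSS * t) * ‖v‖ := hss v hv t ht
  have hnorm0 : scaledLPF A t x v =
      (‖A x‖ / ‖A (Φ x)‖) •
      ((Submodule.orthogonalProjectionOnto (ℝ ∙ (A (Φ x)))ᗮ (Φ v) :
        EuclideanSpace ℝ (Fin d))) := rfl
  have hnorm : ‖scaledLPF A t x v‖ =
      (‖A x‖ / ‖A (Φ x)‖) *
      ‖((Submodule.orthogonalProjectionOnto (ℝ ∙ (A (Φ x)))ᗮ (Φ v) :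
        EuclideanSpace ℝ (Fin d)))‖ := by
    rw [hnorm0, norm_smul, Real.norm_eq_abs, abs_of_nonneg (by positivity)]
  rw [hnorm]
  have key : (‖A x‖ / ‖A (Φ x)‖) *
      ‖((Submodule.orthogonalProjectionOnto (ℝ ∙ (A (Φ x)))ᗮ (Φ v) : EuclideanSpace ℝ (Fin d)))‖
      ≤ (C * Real.sqrt (1 + α ^ 2) * Real.exp (-lamC * t)) *
        (C * Real.exp (lamSS * t) * ‖v‖) :=
    mul_le_mul hratio (le_trans hproj hexpv) (norm_nonneg _) (by positivity)
  calc _ ≤ (C * Real.sqrt (1 + α ^ 2) * Real.exp (-lamC * t)) *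
        (C * Real.exp (lamSS * t) * ‖v‖) := key
    _ = C ^ 2 * Real.sqrt (1 + α ^ 2) * Real.exp (-(lamC - lamSS) * t) * ‖v‖ := by
        rw [show -(lamC - lamSS) * t = -lamC * t + lamSS * t by ring, Real.exp_add]
        ring
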